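/- Fix n and u_0 ∈ L²(Ω). Suppose (ν_t)_{t∈[0,T]} and (ν̃_t)_{t∈[0,T]} are two families of finite signed measures on Ω̄ such that, for every bounded measurable f : Ω̄ → ℝ that is continuous on A_n and on B_n, the maps t ↦ ∫_{Ω̄} f dν_t and t ↦ ∫_{Ω̄} f dν̃_t are differentiable with d/dt ∫ f dν_t = ∫ L_n f dν_t and d/dt ∫ f dν̃_t = ∫ L_n f dν̃_t on [0,T], and ∫ f dν_0 = ∫ f dν̃_0 = ∫_Ω f(x) u_0(x) dx. Then ν_t = ν̃_t for every t ∈ [0,T]. -/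

import Mathlib

open MeasureTheory Set Filter Topology Bornology

/-- Characteristic function of a set, real-valued. -/
noncomputable def chi {α : Type*} (A : Set α) (x : α) : ℝ :=
  @ite _ (x ∈ A) (Classical.propDecidable _) 1 0

/-- The nonlocal operator `L_n` associated with the partition `(A, B)` of `Ω̄`
and the kernels `J, G, R`. -/
noncomputable def Lop {N : ℕ} (Ω A B : Set (Fin N → ℝ))
    (J G R : (Fin N → ℝ) → (Fin N → ℝ) → ℝ) (f : (Fin N → ℝ) → ℝ) (x : Fin N → ℝ) : ℝ :=
  chi A x * (∫ y in Ω, chi A y * J x y * (f y - f x))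
    + chi B x * (∫ y in Ω, chi B y * G x y * (f y - f x))
    + chi A x * (∫ y in Ω, chi B y * R x y * (f y - f x))
    + chi B x * (∫ y in Ω, chi A y * R x y * (f y - f x))

/-- Hypothesis (H) on a kernel: continuity, nonnegativity, positivity on the diagonal,
symmetry, and unit total mass. -/
def KernelH {N : ℕ} (V : (Fin N → ℝ) → (Fin N → ℝ) → ℝ) : Prop :=
  Continuous (fun p : (Fin N → ℝ) × (Fin N → ℝ) => V p.1 p.2) ∧
    (∀ x y, 0 ≤ V x y) ∧ (∀ x, 0 < V x x) ∧ (∀ x y, V x y = V y x) ∧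
    (∀ x, (∫ y, V x y) = 1)

/-- Integral of a real function against a (finite) signed measure, via the Jordan
decomposition. -/
noncomputable def sInt {α : Type*} [MeasurableSpace α] (f : α → ℝ)
    (μ : MeasureTheory.SignedMeasure α) : ℝ :=
  (∫ x, f x ∂μ.toJordanDecomposition.posPart) - ∫ x, f x ∂μ.toJordanDecomposition.negPart

section SM
variable {α : Type*} [MeasurableSpace α]

lemma integrable_of_bdd {μ : Measure α} [IsFiniteMeasure μ] {f : α → ℝ} {M : ℝ}
    (hf : Measurable f) (hM : ∀ x, |f x| ≤ M) : Integrable f μ :=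
  (integrable_const M).mono' hf.aestronglyMeasurable
    (Filter.Eventually.of_forall (fun x => by simpa using hM x))

lemma signedMeasure_apply_jordan (μ : SignedMeasure α) {s : Set α} (hs : MeasurableSet s) :
    μ s = (μ.toJordanDecomposition.posPart s).toReal
      - (μ.toJordanDecomposition.negPart s).toReal := by
  conv_lhs => rw [← μ.toSignedMeasure_toJordanDecomposition]
  rw [JordanDecomposition.toSignedMeasure, VectorMeasure.sub_apply,
    Measure.toSignedMeasure_apply_measurable hs, Measure.toSignedMeasure_apply_measurable hs]
  rfl

lemma jordan_null_of_forall (μ : SignedMeasure α) {u : Set α} (hu : MeasurableSet u)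
    (h : ∀ s, MeasurableSet s → s ⊆ u → μ s = 0) :
    μ.toJordanDecomposition.posPart u = 0 ∧ μ.toJordanDecomposition.negPart u = 0 := by
  obtain ⟨S, hS, hpS, hnSc⟩ := μ.toJordanDecomposition.mutuallySingular
  constructor
  · have h1 : μ.toJordanDecomposition.posPart (u ∩ S) = 0 :=
      measure_mono_null inter_subset_right hpS
    have h2 : μ.toJordanDecomposition.negPart (u ∩ Sᶜ) = 0 :=
      measure_mono_null inter_subset_right hnSc
    have h3 : μ (u ∩ Sᶜ) = 0 := h _ (hu.inter hS.compl) inter_subset_left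
    rw [signedMeasure_apply_jordan μ (hu.inter hS.compl), h2] at h3
    simp only [ENNReal.toReal_zero, sub_zero] at h3
    have h4 : μ.toJordanDecomposition.posPart (u ∩ Sᶜ) = 0 := by
      have := ENNReal.toReal_eq_zero_iff _ |>.mp h3
      rcases this with h | h
      · exact h
      · exact absurd h (measure_ne_top _ _)
    have hsplit : μ.toJordanDecomposition.posPart u
        ≤ μ.toJordanDecomposition.posPart (u ∩ S) + μ.toJordanDecomposition.posPart (u ∩ Sᶜ) :=
      (measure_mono (by rw [← inter_union_distrib_left, union_compl_self, inter_univ])).trans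
        (measure_union_le _ _)
    rw [h1, h4, add_zero] at hsplit
    exact le_antisymm hsplit zero_le
  · have h1 : μ.toJordanDecomposition.negPart (u ∩ Sᶜ) = 0 :=
      measure_mono_null inter_subset_right hnSc
    have h3 : μ (u ∩ S) = 0 := h _ (hu.inter hS) inter_subset_left
    rw [signedMeasure_apply_jordan μ (hu.inter hS),
      measure_mono_null inter_subset_right hpS] at h3
    simp only [ENNReal.toReal_zero, zero_sub, neg_eq_zero] at h3
    have h4 : μ.toJordanDecomposition.negPart (u ∩ S) = 0 := by
      have := ENNReal.toReal_eq_zero_iff _ |>.mp h3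
      rcases this with h | h
      · exact h
      · exact absurd h (measure_ne_top _ _)
    have hsplit : μ.toJordanDecomposition.negPart u
        ≤ μ.toJordanDecomposition.negPart (u ∩ S) + μ.toJordanDecomposition.negPart (u ∩ Sᶜ) :=
      (measure_mono (by rw [← inter_union_distrib_left, union_compl_self, inter_univ])).trans
        (measure_union_le _ _)
    rw [h4, h1, add_zero] at hsplit
    exact le_antisymm hsplit zero_le

lemma sInt_bound (μ : SignedMeasure α) {f : α → ℝ} {M : ℝ} (hM0 : 0 ≤ M)
    (hM : ∀ x, |f x| ≤ M) :
    |sInt f μ| ≤ M * ((μ.toJordanDecomposition.posPart univ).toReal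
      + (μ.toJordanDecomposition.negPart univ).toReal) := by
  have h1 : ‖∫ x, f x ∂μ.toJordanDecomposition.posPart‖
      ≤ M * (μ.toJordanDecomposition.posPart univ).toReal :=
    norm_integral_le_of_norm_le_const (Filter.Eventually.of_forall (fun x => by simpa using hM x))
  have h2 : ‖∫ x, f x ∂μ.toJordanDecomposition.negPart‖
      ≤ M * (μ.toJordanDecomposition.negPart univ).toReal :=
    norm_integral_le_of_norm_le_const (Filter.Eventually.of_forall (fun x => by simpa using hM x))
  rw [sInt, mul_add]
  exact (abs_sub _ _).trans (add_le_add h1 h2)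

lemma sInt_add (μ : SignedMeasure α) {f g : α → ℝ} {Mf Mg : ℝ}
    (hf : Measurable f) (hMf : ∀ x, |f x| ≤ Mf) (hg : Measurable g) (hMg : ∀ x, |g x| ≤ Mg) :
    sInt (f + g) μ = sInt f μ + sInt g μ := by
  unfold sInt
  simp only [Pi.add_apply]
  rw [integral_add (integrable_of_bdd hf hMf) (integrable_of_bdd hg hMg),
    integral_add (integrable_of_bdd hf hMf) (integrable_of_bdd hg hMg)]
  ring

lemma sInt_smul (μ : SignedMeasure α) (c : ℝ) (f : α → ℝ) :
    sInt (c • f) μ = c * sInt f μ := by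
  unfold sInt
  have h : ∀ (m : Measure α), ∫ x, (c • f) x ∂m = c * ∫ x, f x ∂m := fun m => by
    simp only [Pi.smul_apply, smul_eq_mul]
    exact integral_const_mul c f
  rw [h, h]; ring

lemma sInt_congr_of_null (μ : SignedMeasure α) {f g : α → ℝ} {u : Set α}
    (hu : MeasurableSet u)
    (hpos : μ.toJordanDecomposition.posPart u = 0)
    (hneg : μ.toJordanDecomposition.negPart u = 0)
    (hfg : ∀ x ∉ u, f x = g x) :
    sInt f μ = sInt g μ := by
  have hsub : {x | f x ≠ g x} ⊆ u := fun x hx => by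
    by_contra hxu; exact hx (hfg x hxu)
  have h1 : f =ᵐ[μ.toJordanDecomposition.posPart] g := by
    rw [Filter.EventuallyEq, ae_iff]
    exact measure_mono_null hsub hpos
  have h2 : f =ᵐ[μ.toJordanDecomposition.negPart] g := by
    rw [Filter.EventuallyEq, ae_iff]
    exact measure_mono_null hsub hneg
  unfold sInt
  rw [integral_congr_ae h1, integral_congr_ae h2]

end SM

section Kernel
variable {N : ℕ} {V : (Fin N → ℝ) → (Fin N → ℝ) → ℝ}

lemma chi_measurable {A : Set (Fin N → ℝ)} (hA : MeasurableSet A) : Measurable (chi A) := by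
  unfold chi
  exact Measurable.ite hA measurable_const measurable_const

lemma chi_abs_le_one (A : Set (Fin N → ℝ)) (x : Fin N → ℝ) : |chi A x| ≤ 1 := by
  unfold chi; split <;> simp

lemma chi_of_mem {A : Set (Fin N → ℝ)} {x : Fin N → ℝ} (h : x ∈ A) : chi A x = 1 := by
  unfold chi; split <;> simp_all

lemma chi_of_not_mem {A : Set (Fin N → ℝ)} {x : Fin N → ℝ} (h : x ∉ A) : chi A x = 0 := by
  unfold chi; split <;> simp_all

lemma KernelH.cont_right (hV : KernelH V) (x : Fin N → ℝ) : Continuous (V x) :=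
  hV.1.comp (continuous_const.prodMk continuous_id)

lemma KernelH.integrable (hV : KernelH V) (x : Fin N → ℝ) : Integrable (V x) volume := by
  by_contra h
  have h1 := hV.2.2.2.2 x
  rw [integral_undef h] at h1
  exact one_ne_zero h1.symm

lemma KernelH.setIntegral_le_one (hV : KernelH V) (x : Fin N → ℝ) (s : Set (Fin N → ℝ)) :
    ∫ y in s, V x y ≤ 1 := by
  rw [← hV.2.2.2.2 x]
  exact setIntegral_le_integral (hV.integrable x)
    (Filter.Eventually.of_forall (fun y => hV.2.1 x y))

/-- Integrability of a bounded measurable weight against the kernel on `Ω`. -/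
lemma weighted_integrable (hV : KernelH V) {w : (Fin N → ℝ) → ℝ} {M : ℝ}
    (hw : Measurable w) (hM : ∀ y, |w y| ≤ M) (Ω : Set (Fin N → ℝ)) (x : Fin N → ℝ) :
    Integrable (fun y => w y * V x y) (volume.restrict Ω) := by
  have hg : Integrable (fun y => M * V x y) (volume.restrict Ω) :=
    ((hV.integrable x).const_mul M).restrict
  refine hg.mono' ((hw.mul (hV.cont_right x).measurable).aestronglyMeasurable) ?_
  refine Filter.Eventually.of_forall (fun y => ?_)
  rw [Real.norm_eq_abs, abs_mul, abs_of_nonneg (hV.2.1 x y)]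
  exact mul_le_mul_of_nonneg_right (hM y) (hV.2.1 x y)

lemma weighted_bound (hV : KernelH V) {w : (Fin N → ℝ) → ℝ} {M : ℝ} (hM0 : 0 ≤ M)
    (hw : Measurable w) (hM : ∀ y, |w y| ≤ M) (Ω : Set (Fin N → ℝ)) (x : Fin N → ℝ) :
    |∫ y in Ω, w y * V x y| ≤ M := by
  have h0 : ‖∫ y in Ω, w y * V x y‖ ≤ ∫ y in Ω, ‖w y * V x y‖ :=
    norm_integral_le_integral_norm _
  have hmono : ∫ y in Ω, ‖w y * V x y‖ ≤ ∫ y in Ω, M * V x y := by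
    refine integral_mono_of_nonneg (Filter.Eventually.of_forall (fun y => norm_nonneg _))
      (((hV.integrable x).const_mul M).restrict (s := Ω))
      (Filter.Eventually.of_forall (fun y => ?_))
    show ‖w y * V x y‖ ≤ M * V x y
    rw [Real.norm_eq_abs, abs_mul, abs_of_nonneg (hV.2.1 x y)]
    exact mul_le_mul_of_nonneg_right (hM y) (hV.2.1 x y)
  have h1 : |∫ y in Ω, w y * V x y| ≤ ∫ y in Ω, M * V x y := h0.trans hmono
  refine h1.trans ?_
  rw [integral_const_mul]
  calc M * ∫ y in Ω, V x y ≤ M * 1 :=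
        mul_le_mul_of_nonneg_left (hV.setIntegral_le_one x Ω) hM0
    _ = M := mul_one M

lemma weighted_continuous (hV : KernelH V) {w : (Fin N → ℝ) → ℝ} {M : ℝ}
    (hw : Measurable w) (hM : ∀ y, |w y| ≤ M)
    {Ω : Set (Fin N → ℝ)} (hΩm : MeasurableSet Ω) (hΩb : IsBounded Ω) :
    Continuous (fun x => ∫ y in Ω, w y * V x y) := by
  rw [continuous_iff_continuousAt]
  intro x₀
  have hcomp : IsCompact ((Metric.closedBall x₀ 1) ×ˢ (closure Ω)) :=
    (isCompact_closedBall x₀ 1).prod hΩb.isCompact_closure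
  obtain ⟨C, hC⟩ := hcomp.exists_bound_of_continuousOn hV.1.continuousOn
  haveI : IsFiniteMeasure (volume.restrict Ω) :=
    ⟨by rw [Measure.restrict_apply_univ]; exact hΩb.measure_lt_top⟩
  refine continuousAt_of_dominated (bound := fun _ => M * C) ?_ ?_ (integrable_const _) ?_
  · exact Filter.Eventually.of_forall
      (fun x => (hw.mul (hV.cont_right x).measurable).aestronglyMeasurable)
  · filter_upwards [Metric.closedBall_mem_nhds x₀ one_pos] with x hx
    filter_upwards [ae_restrict_mem hΩm] with y hy
    rw [Real.norm_eq_abs, abs_mul, abs_of_nonneg (hV.2.1 x y)]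
    have hVC : V x y ≤ C := by
      have := hC (x, y) ⟨hx, subset_closure hy⟩
      rw [Real.norm_eq_abs] at this
      exact (le_abs_self _).trans this
    have hM0 : 0 ≤ M := le_trans (abs_nonneg _) (hM y)
    exact mul_le_mul (hM y) hVC (hV.2.1 x y) hM0
  · refine Filter.Eventually.of_forall (fun y => ?_)
    exact (continuous_const.mul (hV.1.comp (continuous_id.prodMk continuous_const))).continuousAt

end Kernel

section LopTest
variable {N : ℕ}

lemma term_decomp {V : (Fin N → ℝ) → (Fin N → ℝ) → ℝ} (hV : KernelH V)
    {Ω S : Set (Fin N → ℝ)} (hΩm : MeasurableSet Ω) (hΩb : IsBounded Ω)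
    (hS : MeasurableSet S)
    {f : (Fin N → ℝ) → ℝ} {M : ℝ} (hfm : Measurable f) (hM0 : 0 ≤ M) (hM : ∀ x, |f x| ≤ M) :
    ∃ H g : (Fin N → ℝ) → ℝ, Continuous H ∧ Continuous g ∧
      (∀ x, |H x| ≤ M) ∧ (∀ x, |g x| ≤ 1) ∧
      ∀ x, (∫ y in Ω, chi S y * V x y * (f y - f x)) = H x - f x * g x := by
  have hw1m : Measurable (fun y => chi S y * f y) := (chi_measurable hS).mul hfm
  have hw1b : ∀ y, |chi S y * f y| ≤ M := fun y => by
    rw [abs_mul]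
    calc |chi S y| * |f y| ≤ 1 * M :=
          mul_le_mul (chi_abs_le_one S y) (hM y) (abs_nonneg _) zero_le_one
      _ = M := one_mul M
  refine ⟨fun x => ∫ y in Ω, (chi S y * f y) * V x y, fun x => ∫ y in Ω, chi S y * V x y,
    weighted_continuous hV hw1m hw1b hΩm hΩb,
    weighted_continuous hV (chi_measurable hS) (chi_abs_le_one S) hΩm hΩb,
    fun x => weighted_bound hV hM0 hw1m hw1b Ω x,
    fun x => weighted_bound hV zero_le_one (chi_measurable hS) (chi_abs_le_one S) Ω x,
    fun x => ?_⟩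
  have heq : ∀ y, chi S y * V x y * (f y - f x)
      = (chi S y * f y) * V x y - f x * (chi S y * V x y) := fun y => by ring
  rw [integral_congr_ae (Filter.Eventually.of_forall heq),
    integral_sub (weighted_integrable hV hw1m hw1b Ω x)
      ((weighted_integrable hV (chi_measurable hS) (chi_abs_le_one S) Ω x).const_mul (f x)),
    integral_const_mul]

lemma Lop_test {Ω A B : Set (Fin N → ℝ)} (hΩo : IsOpen Ω) (hΩb : IsBounded Ω)
    {J G R : (Fin N → ℝ) → (Fin N → ℝ) → ℝ}
    (hJ : KernelH J) (hG : KernelH G) (hR : KernelH R)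
    (hdisj : A ∩ B = ∅) (hBopen : IsOpen B) (hAmeas : MeasurableSet A)
    {f : (Fin N → ℝ) → ℝ} {M : ℝ} (hfm : Measurable f) (hM0 : 0 ≤ M) (hM : ∀ x, |f x| ≤ M)
    (hfA : ContinuousOn f A) (hfB : ContinuousOn f B) :
    Measurable (Lop Ω A B J G R f) ∧ (∀ x, |Lop Ω A B J G R f x| ≤ 4 * M) ∧
      ContinuousOn (Lop Ω A B J G R f) A ∧ ContinuousOn (Lop Ω A B J G R f) B := by
  have hnAB : ∀ x, x ∈ A → x ∉ B := fun x hxA hxB =>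
    (Set.eq_empty_iff_forall_notMem.mp hdisj x) ⟨hxA, hxB⟩
  have hBmeas : MeasurableSet B := hBopen.measurableSet
  obtain ⟨H1, g1, hH1c, hg1c, hH1b, hg1b, h1⟩ :=
    term_decomp hJ hΩo.measurableSet hΩb hAmeas hfm hM0 hM
  obtain ⟨H2, g2, hH2c, hg2c, hH2b, hg2b, h2⟩ :=
    term_decomp hG hΩo.measurableSet hΩb hBmeas hfm hM0 hM
  obtain ⟨H3, g3, hH3c, hg3c, hH3b, hg3b, h3⟩ :=
    term_decomp hR hΩo.measurableSet hΩb hBmeas hfm hM0 hM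
  obtain ⟨H4, g4, hH4c, hg4c, hH4b, hg4b, h4⟩ :=
    term_decomp hR hΩo.measurableSet hΩb hAmeas hfm hM0 hM
  have hLeq : Lop Ω A B J G R f = fun x =>
      chi A x * (H1 x - f x * g1 x) + chi B x * (H2 x - f x * g2 x)
        + chi A x * (H3 x - f x * g3 x) + chi B x * (H4 x - f x * g4 x) := by
    funext x
    rw [Lop, h1 x, h2 x, h3 x, h4 x]
  have htermb : ∀ (H g : (Fin N → ℝ) → ℝ), (∀ x, |H x| ≤ M) → (∀ x, |g x| ≤ 1) →
      ∀ x, |H x - f x * g x| ≤ 2 * M := by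
    intro H g hH hg x
    calc |H x - f x * g x| ≤ |H x| + |f x * g x| := abs_sub _ _
      _ ≤ M + M * 1 := by
          refine add_le_add (hH x) ?_
          rw [abs_mul]
          exact mul_le_mul (hM x) (hg x) (abs_nonneg _) hM0
      _ = 2 * M := by ring
  refine ⟨?_, ?_, ?_, ?_⟩
  · rw [hLeq]
    exact ((((chi_measurable hAmeas).mul
        (hH1c.measurable.sub (hfm.mul hg1c.measurable))).add
      ((chi_measurable hBmeas).mul
        (hH2c.measurable.sub (hfm.mul hg2c.measurable)))).add
      ((chi_measurable hAmeas).mul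
        (hH3c.measurable.sub (hfm.mul hg3c.measurable)))).add
      ((chi_measurable hBmeas).mul
        (hH4c.measurable.sub (hfm.mul hg4c.measurable)))
  · intro x
    rw [hLeq]
    beta_reduce
    by_cases hxA : x ∈ A
    · have hxB : x ∉ B := hnAB x hxA
      rw [chi_of_mem hxA, chi_of_not_mem hxB]
      simp only [one_mul, zero_mul, add_zero, zero_add]
      calc |(H1 x - f x * g1 x) + (H3 x - f x * g3 x)|
          ≤ |H1 x - f x * g1 x| + |H3 x - f x * g3 x| := abs_add_le _ _
        _ ≤ 2 * M + 2 * M := add_le_add (htermb H1 g1 hH1b hg1b x) (htermb H3 g3 hH3b hg3b x)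
        _ = 4 * M := by ring
    · by_cases hxB : x ∈ B
      · rw [chi_of_mem hxB, chi_of_not_mem hxA]
        simp only [one_mul, zero_mul, add_zero, zero_add]
        calc |(H2 x - f x * g2 x) + (H4 x - f x * g4 x)|
            ≤ |H2 x - f x * g2 x| + |H4 x - f x * g4 x| := abs_add_le _ _
          _ ≤ 2 * M + 2 * M := add_le_add (htermb H2 g2 hH2b hg2b x) (htermb H4 g4 hH4b hg4b x)
          _ = 4 * M := by ring
      · rw [chi_of_not_mem hxA, chi_of_not_mem hxB]
        simp only [zero_mul, add_zero, zero_add, abs_zero]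
        positivity
  · have hcont : ContinuousOn (fun x => (H1 x - f x * g1 x) + (H3 x - f x * g3 x)) A :=
      (hH1c.continuousOn.sub (hfA.mul hg1c.continuousOn)).add
        (hH3c.continuousOn.sub (hfA.mul hg3c.continuousOn))
    have hEq : EqOn (Lop Ω A B J G R f)
        (fun x => (H1 x - f x * g1 x) + (H3 x - f x * g3 x)) A := by
      intro x hx
      have hxB : x ∉ B := hnAB x hx
      rw [hLeq]
      beta_reduce
      rw [chi_of_mem hx, chi_of_not_mem hxB]
      ring
    exact hcont.congr hEq
  · have hcont : ContinuousOn (fun x => (H2 x - f x * g2 x) + (H4 x - f x * g4 x)) B :=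
      (hH2c.continuousOn.sub (hfB.mul hg2c.continuousOn)).add
        (hH4c.continuousOn.sub (hfB.mul hg4c.continuousOn))
    have hEq : EqOn (Lop Ω A B J G R f)
        (fun x => (H2 x - f x * g2 x) + (H4 x - f x * g4 x)) B := by
      intro x hx
      have hxA : x ∉ A := fun hxA => hnAB x hxA hx
      rw [hLeq]
      beta_reduce
      rw [chi_of_mem hx, chi_of_not_mem hxA]
      ring
    exact hcont.congr hEq

end LopTest

section Ext
open BoundedContinuousFunction
variable {N : ℕ}

noncomputable def extA (A : Set (Fin N → ℝ)) (g : A →ᵇ ℝ) : (Fin N → ℝ) → ℝ :=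
  Function.extend Subtype.val (⇑g) 0

lemma extA_mem {A : Set (Fin N → ℝ)} (g : A →ᵇ ℝ) {x : Fin N → ℝ} (hx : x ∈ A) :
    extA A g x = g ⟨x, hx⟩ := by
  exact Subtype.val_injective.extend_apply (⇑g) 0 ⟨x, hx⟩

lemma extA_not_mem {A : Set (Fin N → ℝ)} (g : A →ᵇ ℝ) {x : Fin N → ℝ} (hx : x ∉ A) :
    extA A g x = 0 := by
  rw [extA, Function.extend_apply' _ _ _ (by rintro ⟨a, rfl⟩; exact hx a.2)]
  rfl

lemma extA_measurable {A : Set (Fin N → ℝ)} (hA : MeasurableSet A) (g : A →ᵇ ℝ) :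
    Measurable (extA A g) :=
  (MeasurableEmbedding.subtype_coe hA).measurable_extend g.continuous.measurable measurable_const

lemma extA_bound {A : Set (Fin N → ℝ)} (g : A →ᵇ ℝ) (x : Fin N → ℝ) : |extA A g x| ≤ ‖g‖ := by
  by_cases hx : x ∈ A
  · rw [extA_mem g hx, ← Real.norm_eq_abs]
    exact g.norm_coe_le_norm _
  · rw [extA_not_mem g hx]
    simpa using norm_nonneg g

lemma extA_contOn {A : Set (Fin N → ℝ)} (g : A →ᵇ ℝ) : ContinuousOn (extA A g) A := by
  rw [continuousOn_iff_continuous_restrict]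
  have h : A.domRestrict (extA A g) = ⇑g := funext fun a => extA_mem g a.2
  rw [h]
  exact g.continuous

lemma extA_contOn_zero {A S : Set (Fin N → ℝ)} (hdisj : ∀ x ∈ S, x ∉ A) (g : A →ᵇ ℝ) :
    ContinuousOn (extA A g) S :=
  continuousOn_const.congr (fun x hx => extA_not_mem g (hdisj x hx))

lemma extA_add {A : Set (Fin N → ℝ)} (g g' : A →ᵇ ℝ) :
    extA A (g + g') = extA A g + extA A g' := funext fun x => by
  by_cases hx : x ∈ A
  · simp [extA_mem _ hx]
  · simp [extA_not_mem _ hx]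

lemma extA_smul {A : Set (Fin N → ℝ)} (c : ℝ) (g : A →ᵇ ℝ) :
    extA A (c • g) = c • extA A g := funext fun x => by
  by_cases hx : x ∈ A
  · simp [extA_mem _ hx]
  · simp [extA_not_mem _ hx]

/-- The canonical extension of a pair of bounded continuous functions on `A` and `B`. -/
noncomputable def ext2 (A B : Set (Fin N → ℝ)) (p : (A →ᵇ ℝ) × (B →ᵇ ℝ)) :
    (Fin N → ℝ) → ℝ :=
  extA A p.1 + extA B p.2

lemma ext2_measurable {A B : Set (Fin N → ℝ)} (hA : MeasurableSet A) (hB : MeasurableSet B)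
    (p : (A →ᵇ ℝ) × (B →ᵇ ℝ)) : Measurable (ext2 A B p) :=
  (extA_measurable hA p.1).add (extA_measurable hB p.2)

lemma ext2_bound {A B : Set (Fin N → ℝ)} (p : (A →ᵇ ℝ) × (B →ᵇ ℝ)) (x : Fin N → ℝ) :
    |ext2 A B p x| ≤ ‖p.1‖ + ‖p.2‖ :=
  (abs_add_le _ _).trans (add_le_add (extA_bound p.1 x) (extA_bound p.2 x))

lemma ext2_contOn_A {A B : Set (Fin N → ℝ)} (hdisj : ∀ x ∈ A, x ∉ B)
    (p : (A →ᵇ ℝ) × (B →ᵇ ℝ)) : ContinuousOn (ext2 A B p) A :=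
  (extA_contOn p.1).add (extA_contOn_zero hdisj p.2)

lemma ext2_contOn_B {A B : Set (Fin N → ℝ)} (hdisj : ∀ x ∈ B, x ∉ A)
    (p : (A →ᵇ ℝ) × (B →ᵇ ℝ)) : ContinuousOn (ext2 A B p) B :=
  (extA_contOn_zero hdisj p.1).add (extA_contOn p.2)

/-- Integration of the extension against a signed measure, as a continuous linear map. -/
noncomputable def Phi {N : ℕ} (A B : Set (Fin N → ℝ)) (hA : MeasurableSet A)
    (hB : MeasurableSet B) (μ : SignedMeasure (Fin N → ℝ)) :
    ((A →ᵇ ℝ) × (B →ᵇ ℝ)) →L[ℝ] ℝ :=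
  LinearMap.mkContinuousOfExistsBound
    { toFun := fun p => sInt (ext2 A B p) μ
      map_add' := fun p q => by
        show sInt (ext2 A B (p + q)) μ = sInt (ext2 A B p) μ + sInt (ext2 A B q) μ
        have h1 : ext2 A B (p + q) = ext2 A B p + ext2 A B q := by
          show extA A (p.1 + q.1) + extA B (p.2 + q.2) = _
          rw [extA_add, extA_add]
          funext x
          simp [ext2]
          ring
        rw [h1]
        exact sInt_add μ (ext2_measurable hA hB p) (ext2_bound p)
          (ext2_measurable hA hB q) (ext2_bound q)
      map_smul' := fun c p => by
        show sInt (ext2 A B (c • p)) μ = c • sInt (ext2 A B p) μ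
        rw [smul_eq_mul]
        have h1 : ext2 A B (c • p) = c • ext2 A B p := by
          show extA A (c • p.1) + extA B (c • p.2) = _
          rw [extA_smul, extA_smul]
          funext x
          simp [ext2]
          ring
        rw [h1]
        exact sInt_smul μ c (ext2 A B p) }
    ⟨2 * ((μ.toJordanDecomposition.posPart univ).toReal
        + (μ.toJordanDecomposition.negPart univ).toReal), by
      intro p
      have hb := sInt_bound μ (f := ext2 A B p)
        (add_nonneg (norm_nonneg p.1) (norm_nonneg p.2)) (ext2_bound p)
      refine hb.trans ?_
      have h2 : ‖p.1‖ + ‖p.2‖ ≤ 2 * ‖p‖ := by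
        have := norm_fst_le p
        have := norm_snd_le p
        linarith
      have hC0 : 0 ≤ (μ.toJordanDecomposition.posPart univ).toReal
          + (μ.toJordanDecomposition.negPart univ).toReal :=
        add_nonneg ENNReal.toReal_nonneg ENNReal.toReal_nonneg
      calc (‖p.1‖ + ‖p.2‖) * _ ≤ (2 * ‖p‖) * _ := mul_le_mul_of_nonneg_right h2 hC0
        _ = _ := by ring⟩

lemma Phi_apply {N : ℕ} (A B : Set (Fin N → ℝ)) (hA : MeasurableSet A)
    (hB : MeasurableSet B) (μ : SignedMeasure (Fin N → ℝ)) (p : (A →ᵇ ℝ) × (B →ᵇ ℝ)) :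
    Phi A B hA hB μ p = sInt (ext2 A B p) μ := rfl

end Ext

open BoundedContinuousFunction

theorem stmt13 {N : ℕ} (Ω : Set (Fin N → ℝ))
    (hΩo : IsOpen Ω) (hΩb : IsBounded Ω) (hΩc : IsConnected Ω)
    (J G R : (Fin N → ℝ) → (Fin N → ℝ) → ℝ)
    (hJ : KernelH J) (hG : KernelH G) (hR : KernelH R)
    (A B : Set (Fin N → ℝ))
    (hpart : closure Ω = A ∪ B) (hdisj : A ∩ B = ∅)
    (hBopen : IsOpen B) (hAmeas : MeasurableSet A)
    (u0 : (Fin N → ℝ) → ℝ) (hu0 : MemLp u0 2 (volume.restrict Ω))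
    (T : ℝ) (hT : 0 < T)
    (ν ν' : ℝ → MeasureTheory.SignedMeasure (Fin N → ℝ))
    (hsupp : ∀ t ∈ Set.Icc (0 : ℝ) T, ∀ s : Set (Fin N → ℝ),
      MeasurableSet s → s ⊆ (closure Ω)ᶜ → ν t s = 0)
    (hsupp' : ∀ t ∈ Set.Icc (0 : ℝ) T, ∀ s : Set (Fin N → ℝ),
      MeasurableSet s → s ⊆ (closure Ω)ᶜ → ν' t s = 0)
    (hν : ∀ f : (Fin N → ℝ) → ℝ, Measurable f → (∃ M, ∀ x, |f x| ≤ M) →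
      ContinuousOn f A → ContinuousOn f B →
      ∀ t ∈ Set.Icc (0 : ℝ) T,
        HasDerivWithinAt (fun s => sInt f (ν s))
          (sInt (Lop Ω A B J G R f) (ν t)) (Set.Icc 0 T) t)
    (hν' : ∀ f : (Fin N → ℝ) → ℝ, Measurable f → (∃ M, ∀ x, |f x| ≤ M) →
      ContinuousOn f A → ContinuousOn f B →
      ∀ t ∈ Set.Icc (0 : ℝ) T,
        HasDerivWithinAt (fun s => sInt f (ν' s))
          (sInt (Lop Ω A B J G R f) (ν' t)) (Set.Icc 0 T) t)
    (hν0 : ∀ f : (Fin N → ℝ) → ℝ, Measurable f → (∃ M, ∀ x, |f x| ≤ M) →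
      ContinuousOn f A → ContinuousOn f B →
      sInt f (ν 0) = ∫ x in Ω, f x * u0 x)
    (hν0' : ∀ f : (Fin N → ℝ) → ℝ, Measurable f → (∃ M, ∀ x, |f x| ≤ M) →
      ContinuousOn f A → ContinuousOn f B →
      sInt f (ν' 0) = ∫ x in Ω, f x * u0 x) :
    ∀ t ∈ Set.Icc (0 : ℝ) T, ν t = ν' t := by
  classical
  have hnAB : ∀ x ∈ A, x ∉ B := fun x hxA hxB =>
    (Set.eq_empty_iff_forall_notMem.mp hdisj x) ⟨hxA, hxB⟩
  have hnBA : ∀ x ∈ B, x ∉ A := fun x hxB hxA =>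
    (Set.eq_empty_iff_forall_notMem.mp hdisj x) ⟨hxA, hxB⟩
  have hBmeas : MeasurableSet B := hBopen.measurableSet
  have hKm : MeasurableSet (closure Ω) := measurableSet_closure
  -- the support property in Jordan form
  have hnull : ∀ t ∈ Set.Icc (0:ℝ) T,
      (ν t).toJordanDecomposition.posPart (closure Ω)ᶜ = 0 ∧
        (ν t).toJordanDecomposition.negPart (closure Ω)ᶜ = 0 :=
    fun t ht => jordan_null_of_forall (ν t) hKm.compl (fun s hs hsub => hsupp t ht s hs hsub)
  have hnull' : ∀ t ∈ Set.Icc (0:ℝ) T,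
      (ν' t).toJordanDecomposition.posPart (closure Ω)ᶜ = 0 ∧
        (ν' t).toJordanDecomposition.negPart (closure Ω)ᶜ = 0 :=
    fun t ht => jordan_null_of_forall (ν' t) hKm.compl (fun s hs hsub => hsupp' t ht s hs hsub)
  -- restriction of a test function as a pair of bounded continuous functions
  have mkp : ∀ (f : (Fin N → ℝ) → ℝ) (M : ℝ), 0 ≤ M → (∀ x, |f x| ≤ M) →
      ContinuousOn f A → ContinuousOn f B → ∃ p : (A →ᵇ ℝ) × (B →ᵇ ℝ),
        ‖p‖ ≤ M ∧ ∀ x ∈ A ∪ B, ext2 A B p x = f x := by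
    intro f M hM0 hM hfA hfB
    have hb1 : ∀ a : A, ‖A.restrict f a‖ ≤ M := fun a => by
      rw [Real.norm_eq_abs]; exact hM a.1
    have hb2 : ∀ a : B, ‖B.restrict f a‖ ≤ M := fun a => by
      rw [Real.norm_eq_abs]; exact hM a.1
    have hc1 : Continuous (A.restrict f) := continuousOn_iff_continuous_restrict.mp hfA
    have hc2 : Continuous (B.restrict f) := continuousOn_iff_continuous_restrict.mp hfB
    refine ⟨(BoundedContinuousFunction.ofNormedAddCommGroup (A.restrict f) hc1 M hb1,
      BoundedContinuousFunction.ofNormedAddCommGroup (B.restrict f) hc2 M hb2), ?_, ?_⟩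
    · rw [Prod.norm_def]
      exact max_le (BoundedContinuousFunction.norm_ofNormedAddCommGroup_le hc1 hM0 hb1)
        (BoundedContinuousFunction.norm_ofNormedAddCommGroup_le hc2 hM0 hb2)
    · intro x hx
      rcases hx with hxA | hxB
      · have hxB : x ∉ B := hnAB x hxA
        show extA A _ x + extA B _ x = f x
        rw [extA_mem _ hxA, extA_not_mem _ hxB, add_zero]
        rfl
      · have hxA : x ∉ A := hnBA x hxB
        show extA A _ x + extA B _ x = f x
        rw [extA_not_mem _ hxA, extA_mem _ hxB, zero_add]
        rfl
  -- sInt of a test function only depends on its restriction pair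
  have hrep : ∀ t ∈ Set.Icc (0:ℝ) T, ∀ (f : (Fin N → ℝ) → ℝ) (p : (A →ᵇ ℝ) × (B →ᵇ ℝ)),
      (∀ x ∈ A ∪ B, ext2 A B p x = f x) →
      sInt f (ν t) = Phi A B hAmeas hBmeas (ν t) p ∧
        sInt f (ν' t) = Phi A B hAmeas hBmeas (ν' t) p := by
    intro t ht f p hp
    rw [Phi_apply, Phi_apply]
    constructor
    · exact sInt_congr_of_null (ν t) hKm.compl (hnull t ht).1 (hnull t ht).2
        (fun x hx => (hp x (by rw [← hpart]; exact not_not.mp hx)).symm)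
    · exact sInt_congr_of_null (ν' t) hKm.compl (hnull' t ht).1 (hnull' t ht).2
        (fun x hx => (hp x (by rw [← hpart]; exact not_not.mp hx)).symm)
  -- properties of ext2 as a test function
  have hext2test : ∀ p : (A →ᵇ ℝ) × (B →ᵇ ℝ), Measurable (ext2 A B p) ∧
      (∀ x, |ext2 A B p x| ≤ ‖p.1‖ + ‖p.2‖) ∧ ContinuousOn (ext2 A B p) A ∧
        ContinuousOn (ext2 A B p) B :=
    fun p => ⟨ext2_measurable hAmeas hBmeas p, ext2_bound p, ext2_contOn_A hnAB p,
      ext2_contOn_B hnBA p⟩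
  -- Banach–Steinhaus: uniform bound on the functionals
  have hBS1 : ∃ C, ∀ i : Set.Icc (0:ℝ) T, ‖Phi A B hAmeas hBmeas (ν i)‖ ≤ C := by
    refine banach_steinhaus (fun p => ?_)
    obtain ⟨hm, hb, hcA, hcB⟩ := hext2test p
    have hφc : ContinuousOn (fun s => sInt (ext2 A B p) (ν s)) (Set.Icc 0 T) :=
      fun s hs => (hν _ hm ⟨_, hb⟩ hcA hcB s hs).continuousWithinAt
    obtain ⟨C, hC⟩ := isCompact_Icc.exists_bound_of_continuousOn hφc
    exact ⟨C, fun i => hC i i.2⟩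
  have hBS2 : ∃ C, ∀ i : Set.Icc (0:ℝ) T, ‖Phi A B hAmeas hBmeas (ν' i)‖ ≤ C := by
    refine banach_steinhaus (fun p => ?_)
    obtain ⟨hm, hb, hcA, hcB⟩ := hext2test p
    have hφc : ContinuousOn (fun s => sInt (ext2 A B p) (ν' s)) (Set.Icc 0 T) :=
      fun s hs => (hν' _ hm ⟨_, hb⟩ hcA hcB s hs).continuousWithinAt
    obtain ⟨C, hC⟩ := isCompact_Icc.exists_bound_of_continuousOn hφc
    exact ⟨C, fun i => hC i i.2⟩
  obtain ⟨C1, hC1⟩ := hBS1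
  obtain ⟨C2, hC2⟩ := hBS2
  set C0 : ℝ := max (max C1 C2) 0 with hC0def
  have hC0nn : 0 ≤ C0 := le_max_right _ _
  -- uniform bound on sInt of test functions
  have key : ∀ t ∈ Set.Icc (0:ℝ) T, ∀ (f : (Fin N → ℝ) → ℝ) (M : ℝ), Measurable f → 0 ≤ M →
      (∀ x, |f x| ≤ M) → ContinuousOn f A → ContinuousOn f B →
      |sInt f (ν t)| ≤ C0 * M ∧ |sInt f (ν' t)| ≤ C0 * M := by
    intro t ht f M hfm hM0 hM hfA hfB
    obtain ⟨p, hpnorm, hpeq⟩ := mkp f M hM0 hM hfA hfB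
    obtain ⟨h1, h2⟩ := hrep t ht f p hpeq
    constructor
    · rw [h1, ← Real.norm_eq_abs]
      calc ‖Phi A B hAmeas hBmeas (ν t) p‖
          ≤ ‖Phi A B hAmeas hBmeas (ν t)‖ * ‖p‖ := (Phi A B hAmeas hBmeas (ν t)).le_opNorm p
        _ ≤ C0 * M := by
            refine mul_le_mul ?_ hpnorm (norm_nonneg _) hC0nn
            exact (hC1 ⟨t, ht⟩).trans ((le_max_left C1 C2).trans (le_max_left _ _))
    · rw [h2, ← Real.norm_eq_abs]
      calc ‖Phi A B hAmeas hBmeas (ν' t) p‖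
          ≤ ‖Phi A B hAmeas hBmeas (ν' t)‖ * ‖p‖ := (Phi A B hAmeas hBmeas (ν' t)).le_opNorm p
        _ ≤ C0 * M := by
            refine mul_le_mul ?_ hpnorm (norm_nonneg _) hC0nn
            exact (hC2 ⟨t, ht⟩).trans ((le_max_right C1 C2).trans (le_max_left _ _))
  -- Gronwall-type iteration
  have grow : ∀ (n : ℕ), ∀ t ∈ Set.Icc (0:ℝ) T, ∀ (f : (Fin N → ℝ) → ℝ) (M : ℝ),
      Measurable f → 0 ≤ M → (∀ x, |f x| ≤ M) → ContinuousOn f A → ContinuousOn f B →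
      |sInt f (ν t) - sInt f (ν' t)| ≤ 2 * C0 * M * (4 * t) ^ n / n.factorial := by
    intro n
    induction n with
    | zero =>
      intro t ht f M hfm hM0 hM hfA hfB
      obtain ⟨h1, h2⟩ := key t ht f M hfm hM0 hM hfA hfB
      simp only [pow_zero, Nat.factorial_zero, Nat.cast_one, mul_one, div_one]
      calc |sInt f (ν t) - sInt f (ν' t)| ≤ |sInt f (ν t)| + |sInt f (ν' t)| := abs_sub _ _
        _ ≤ C0 * M + C0 * M := add_le_add h1 h2
        _ = 2 * C0 * M := by ring
    | succ n ih =>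
      intro t ht f M hfm hM0 hM hfA hfB
      obtain ⟨hLm, hLb, hLA, hLB⟩ :=
        Lop_test hΩo hΩb hJ hG hR hdisj hBopen hAmeas hfm hM0 hM hfA hfB
      set g := Lop Ω A B J G R f with hg
      set e : ℝ → ℝ := fun s => sInt f (ν s) - sInt f (ν' s) with he
      set d : ℝ → ℝ := fun s => sInt g (ν s) - sInt g (ν' s) with hd
      have hder : ∀ s ∈ Set.Icc (0:ℝ) T, HasDerivWithinAt e (d s) (Set.Icc 0 T) s :=
        fun s hs => (hν f hfm ⟨M, hM⟩ hfA hfB s hs).sub (hν' f hfm ⟨M, hM⟩ hfA hfB s hs)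
      have he0 : e 0 = 0 := by
        rw [he]
        beta_reduce
        rw [hν0 f hfm ⟨M, hM⟩ hfA hfB, hν0' f hfm ⟨M, hM⟩ hfA hfB]
        ring
      have ht0 : (0:ℝ) ≤ t := ht.1
      have hsub : Set.Icc (0:ℝ) t ⊆ Set.Icc 0 T := Set.Icc_subset_Icc le_rfl ht.2
      have hdercont : ∀ s ∈ Set.Icc (0:ℝ) T, HasDerivWithinAt
          (fun s => sInt g (ν s) - sInt g (ν' s))
          (sInt (Lop Ω A B J G R g) (ν s) - sInt (Lop Ω A B J G R g) (ν' s))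
          (Set.Icc 0 T) s :=
        fun s hs => (hν g hLm ⟨4 * M, hLb⟩ hLA hLB s hs).sub (hν' g hLm ⟨4 * M, hLb⟩ hLA hLB s hs)
      have hdc : ContinuousOn d (Set.Icc 0 t) :=
        fun s hs => ((hdercont s (hsub hs)).continuousWithinAt).mono hsub
      have hec : ContinuousOn e (Set.Icc 0 t) :=
        fun s hs => ((hder s (hsub hs)).continuousWithinAt).mono hsub
      have hdd : ∀ s ∈ Set.Ioo (0:ℝ) t, HasDerivWithinAt e (d s) (Set.Ioi s) s := by
        intro s hs
        have hsT : Set.Icc (0:ℝ) T ∈ 𝓝 s := Icc_mem_nhds hs.1 (hs.2.trans_le ht.2)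
        exact ((hder s ⟨hs.1.le, (hs.2.trans_le ht.2).le⟩).hasDerivAt hsT).hasDerivWithinAt
      have hdi : IntervalIntegrable d volume 0 t :=
        ContinuousOn.intervalIntegrable (by rwa [Set.uIcc_of_le ht0])
      have hFTC : ∫ s in (0:ℝ)..t, d s = e t - e 0 :=
        intervalIntegral.integral_eq_sub_of_hasDeriv_right_of_le ht0 hec hdd hdi
      have het : e t = ∫ s in (0:ℝ)..t, d s := by rw [hFTC, he0, sub_zero]
      -- bound the integrand by the induction hypothesis
      set cst : ℝ := 2 * C0 * (4 * M) * 4 ^ n / n.factorial with hcst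
      have hptw : ∀ s ∈ Set.Icc (0:ℝ) t, |d s| ≤ cst * s ^ n := by
        intro s hs
        have hsT : s ∈ Set.Icc (0:ℝ) T := hsub hs
        have := ih s hsT g (4 * M) hLm (by positivity) hLb hLA hLB
        calc |d s| ≤ 2 * C0 * (4 * M) * (4 * s) ^ n / n.factorial := this
          _ = cst * s ^ n := by rw [hcst, mul_pow]; ring
      have hbi : IntervalIntegrable (fun s => cst * s ^ n) volume 0 t :=
        (continuous_const.mul (continuous_pow n)).intervalIntegrable 0 t
      have habs : |e t| ≤ cst * (t ^ (n + 1) / (n + 1)) := by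
        rw [het]
        calc |∫ s in (0:ℝ)..t, d s| ≤ ∫ s in (0:ℝ)..t, |d s| :=
              intervalIntegral.abs_integral_le_integral_abs ht0
          _ ≤ ∫ s in (0:ℝ)..t, cst * s ^ n :=
              intervalIntegral.integral_mono_on ht0 hdi.abs hbi hptw
          _ = cst * ∫ s in (0:ℝ)..t, s ^ n := intervalIntegral.integral_const_mul cst _
          _ = cst * (t ^ (n + 1) / (n + 1)) := by rw [integral_pow]; norm_num
      refine habs.trans (le_of_eq ?_)
      rw [hcst, Nat.factorial_succ]
      have hfac : (n.factorial : ℝ) ≠ 0 := Nat.cast_ne_zero.mpr n.factorial_ne_zero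
      have hsucc : ((n:ℝ) + 1) ≠ 0 := by positivity
      push_cast
      rw [mul_pow]
      field_simp
      ring
  -- the integrals agree for all test functions
  have hzero : ∀ t ∈ Set.Icc (0:ℝ) T, ∀ f : (Fin N → ℝ) → ℝ, Measurable f →
      (∃ M, ∀ x, |f x| ≤ M) → ContinuousOn f A → ContinuousOn f B →
      sInt f (ν t) = sInt f (ν' t) := by
    intro t ht f hfm hbM hfA hfB
    obtain ⟨M, hM⟩ := hbM
    have hM0 : 0 ≤ M := le_trans (abs_nonneg _) (hM Classical.ofNonempty)
    have hle : ∀ n : ℕ, |sInt f (ν t) - sInt f (ν' t)|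
        ≤ 2 * C0 * M * (4 * t) ^ n / n.factorial :=
      fun n => grow n t ht f M hfm hM0 hM hfA hfB
    have hlim : Tendsto (fun n : ℕ => 2 * C0 * M * (4 * t) ^ n / n.factorial)
        atTop (𝓝 0) := by
      have h1 := FloorSemiring.tendsto_pow_div_factorial_atTop (K := ℝ) (4 * t)
      have h2 := h1.const_mul (2 * C0 * M)
      rw [mul_zero] at h2
      simpa [mul_div_assoc] using h2
    have : |sInt f (ν t) - sInt f (ν' t)| ≤ 0 := ge_of_tendsto' hlim hle
    have h0 : |sInt f (ν t) - sInt f (ν' t)| = 0 := le_antisymm this (abs_nonneg _)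
    have := abs_eq_zero.mp h0
    linarith
  -- conclude equality of the signed measures
  intro t ht
  set P := (ν t).toJordanDecomposition.posPart with hP
  set Nm := (ν t).toJordanDecomposition.negPart with hNm
  set P' := (ν' t).toJordanDecomposition.posPart with hP'
  set Nm' := (ν' t).toJordanDecomposition.negPart with hNm'
  have hmeq : P + Nm' = P' + Nm := by
    refine ext_of_forall_lintegral_eq_of_IsFiniteMeasure (fun fNN => ?_)
    set fR : (Fin N → ℝ) → ℝ := fun x => (fNN x : ℝ) with hfR
    have hfc : Continuous fR := NNReal.continuous_coe.comp fNN.continuous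
    have hbd : ∀ x, |fR x| ≤ (nndist fNN 0 : ℝ) := by
      intro x
      rw [hfR]
      beta_reduce
      rw [abs_of_nonneg (fNN x).coe_nonneg]
      exact_mod_cast BoundedContinuousFunction.NNReal.upper_bound fNN x
    have heq := hzero t ht fR hfc.measurable ⟨_, hbd⟩ hfc.continuousOn hfc.continuousOn
    have hiP : Integrable fR P := integrable_of_bdd hfc.measurable hbd
    have hiN : Integrable fR Nm := integrable_of_bdd hfc.measurable hbd
    have hiP' : Integrable fR P' := integrable_of_bdd hfc.measurable hbd
    have hiN' : Integrable fR Nm' := integrable_of_bdd hfc.measurable hbd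
    have hreal : ∫ x, fR x ∂P + ∫ x, fR x ∂Nm' = ∫ x, fR x ∂P' + ∫ x, fR x ∂Nm := by
      unfold sInt at heq
      rw [← hP, ← hNm, ← hP', ← hNm'] at heq
      linarith
    rw [lintegral_add_measure, lintegral_add_measure,
      lintegral_coe_eq_integral _ hiP, lintegral_coe_eq_integral _ hiN',
      lintegral_coe_eq_integral _ hiP', lintegral_coe_eq_integral _ hiN,
      ← ENNReal.ofReal_add (integral_nonneg (fun x => (fNN x).coe_nonneg))
        (integral_nonneg (fun x => (fNN x).coe_nonneg)),
      ← ENNReal.ofReal_add (integral_nonneg (fun x => (fNN x).coe_nonneg))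
        (integral_nonneg (fun x => (fNN x).coe_nonneg)), hreal]
  refine VectorMeasure.ext (fun s hs => ?_)
  rw [signedMeasure_apply_jordan _ hs, signedMeasure_apply_jordan _ hs]
  have h1 : P s + Nm' s = P' s + Nm s := by
    have := congrFun (congrArg (fun m => m.toOuterMeasure) hmeq) s
    simpa [Measure.add_apply] using (by rw [hmeq] : (P + Nm') s = (P' + Nm) s)
  have h2 := congrArg ENNReal.toReal h1
  rw [ENNReal.toReal_add (measure_ne_top _ _) (measure_ne_top _ _),
    ENNReal.toReal_add (measure_ne_top _ _) (measure_ne_top _ _)] at h2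
  rw [← hP, ← hNm, ← hP', ← hNm']
  linarith
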